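/- Define f(n0) = n0·F(n, n0). Then for all positive integers m and n0 with 2m + 1 ≤ n0, one has f(m+1) + f(n0−m−1) ≤ f(m) + f(n0−m). That is, when a total of n0 nodes is split into two disjoint rings of sizes m and n0−m, making the split more balanced (moving to sizes m+1 and n0−m−1) does not increase the total version age. -/
import Mathlib

open Finset

/-- Closed-form stationary version age of a single node in a ring of `n0` gossiping nodes
(source rate `lamS`, per-node update rate `lam/n`, per-link rate `lam/2`). -/
noncomputable def ringNodeAge (lamS lam n : ℝ) (n0 : ℕ) : ℝ :=
  (lamS / lam) *
    ((∑ j ∈ Finset.Icc 1 (n0 - 1), ∏ k ∈ Finset.Icc 1 j, 1 / ((k : ℝ) / n + 1))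
      + (n / (n0 : ℝ)) * ∏ k ∈ Finset.Icc 1 (n0 - 1), 1 / ((k : ℝ) / n + 1))

/-- Sum of version ages over the `n0` nodes of a ring. -/
noncomputable def ringSumAge (lamS lam n : ℝ) (n0 : ℕ) : ℝ :=
  (n0 : ℝ) * ringNodeAge lamS lam n n0

noncomputable def ringP (n : ℝ) (j : ℕ) : ℝ := ∏ k ∈ Finset.Icc 1 j, 1 / ((k : ℝ) / n + 1)

noncomputable def ringS (n : ℝ) (k : ℕ) : ℝ := ∑ j ∈ Finset.Icc 1 k, ringP n j

lemma ringP_pos {n : ℝ} (hn : 0 < n) (j : ℕ) : 0 < ringP n j := by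
  apply Finset.prod_pos
  intro k hk
  have hk1 : (1 : ℕ) ≤ k := (Finset.mem_Icc.mp hk).1
  have : (0:ℝ) < (k : ℝ) / n + 1 := by positivity
  positivity

lemma ringP_succ (n : ℝ) (l : ℕ) :
    ringP n (l + 1) = ringP n l * (1 / (((l:ℝ) + 1) / n + 1)) := by
  unfold ringP
  rw [Finset.prod_Icc_succ_top (Nat.le_add_left 1 l)]
  push_cast
  ring

lemma ringS_succ (n : ℝ) (l : ℕ) : ringS n (l + 1) = ringS n l + ringP n (l + 1) := by
  unfold ringS
  rw [← Finset.sum_Icc_succ_top (Nat.le_add_left 1 l)]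

lemma step (lamS lam n : ℝ) (hn : 0 < n) (hlam : lam ≠ 0) (l : ℕ) :
    ringSumAge lamS lam n (l + 2)
      = ringSumAge lamS lam n (l + 1) + (lamS / lam) * ringS n (l + 1) := by
  have hne : n ≠ 0 := ne_of_gt hn
  have h0 : lam ≠ 0 := hlam
  have h1 : ((l:ℝ) + 1) ≠ 0 := by positivity
  have h2 : ((l:ℝ) + 2) ≠ 0 := by positivity
  have h3 : (((l:ℝ) + 1) / n + 1) ≠ 0 := by positivity
  unfold ringSumAge ringNodeAge
  have e1 : (l + 2 - 1) = l + 1 := rfl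
  have e2 : (l + 1 - 1) = l := rfl
  rw [e1, e2]
  have hS : (∑ j ∈ Finset.Icc 1 (l+1), ∏ k ∈ Finset.Icc 1 j, 1 / ((k : ℝ) / n + 1)) = ringS n (l+1) := rfl
  have hS' : (∑ j ∈ Finset.Icc 1 l, ∏ k ∈ Finset.Icc 1 j, 1 / ((k : ℝ) / n + 1)) = ringS n l := rfl
  have hP : (∏ k ∈ Finset.Icc 1 (l+1), 1 / ((k : ℝ) / n + 1)) = ringP n (l+1) := rfl
  have hP' : (∏ k ∈ Finset.Icc 1 l, 1 / ((k : ℝ) / n + 1)) = ringP n l := rfl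
  rw [hS, hS', hP, hP', ringS_succ, ringP_succ]
  push_cast
  field_simp
  ring

/-- When a total of `n0` nodes is split into two disjoint rings of sizes `m` and `n0 - m`
with `2m + 1 ≤ n0`, making the split more balanced (sizes `m+1` and `n0-m-1`) does not
increase the total version age: `f(m+1) + f(n0-m-1) ≤ f(m) + f(n0-m)`. -/
theorem balanced_split_age_le
    (lamS lam n : ℝ) (hlamS : 0 < lamS) (hlam : 0 < lam) (hn : 0 < n)
    (m n0 : ℕ) (hm : 0 < m) (hsplit : 2 * m + 1 ≤ n0) :
    ringSumAge lamS lam n (m + 1) + ringSumAge lamS lam n (n0 - m - 1)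
      ≤ ringSumAge lamS lam n m + ringSumAge lamS lam n (n0 - m) := by
  set b := n0 - m - 1 with hb
  have hbm : m ≤ b := by omega
  have hb1 : 1 ≤ b := le_trans hm hbm
  have hnm : n0 - m = b + 1 := by omega
  obtain ⟨a, ha⟩ : ∃ a, m = a + 1 := ⟨m - 1, by omega⟩
  obtain ⟨c, hc⟩ : ∃ c, b = c + 1 := ⟨b - 1, by omega⟩
  rw [hnm]
  have h1 : ringSumAge lamS lam n (m + 1) = ringSumAge lamS lam n m + (lamS/lam) * ringS n m := by
    rw [ha]; exact step lamS lam n hn (ne_of_gt hlam) a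
  have h2 : ringSumAge lamS lam n (b + 1) = ringSumAge lamS lam n b + (lamS/lam) * ringS n b := by
    rw [hc]; exact step lamS lam n hn (ne_of_gt hlam) c
  rw [h1, h2]
  have hmono : ringS n m ≤ ringS n b := by
    unfold ringS
    apply Finset.sum_le_sum_of_subset_of_nonneg
    · exact Finset.Icc_subset_Icc_right hbm
    · intro j _ _; exact le_of_lt (ringP_pos hn j)
  nlinarith [div_pos hlamS hlam, mul_le_mul_of_nonneg_left hmono (le_of_lt (div_pos hlamS hlam))]
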